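/- Define Vol(z) = Л(arg z) + Л(arg(1/(1-z))) + Л(arg((z-1)/z)) for Im z > 0, where Л is the Lobachevsky function Л(θ) = -∫₀^θ log|2 sin t| dt. Then Vol((1-2k+√3·i)/2) → 0 as k → ∞. -/

import Mathlib

section
open Complex

noncomputable def lob (θ : ℝ) : ℝ := -∫ t in (0:ℝ)..θ, Real.log |2 * Real.sin t|

noncomputable def vol (z : ℂ) : ℝ :=
  lob z.arg + lob (1 / (1 - z)).arg + lob ((z - 1) / z).arg

end

open Real MeasureTheory Set intervalIntegral Filter

lemma integrableOn_log01 : IntegrableOn Real.log (Ioc (0:ℝ) 1) := by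
  have h := integrableOn_deriv_of_nonneg (g := fun x => x - x * Real.log x)
      (g' := fun x => -Real.log x) (a := 0) (b := 1)
      ((continuous_id.sub Real.continuous_mul_log).continuousOn)
      (fun x hx => by
        simpa using (hasDerivAt_id x).fun_sub (Real.hasDerivAt_mul_log (ne_of_gt hx.1)))
      (fun x hx => by
        simp only [neg_nonneg]; exact Real.log_nonpos hx.1.le hx.2.le)
  have h2 := h.neg
  simp only [Pi.neg_def, neg_neg] at h2
  exact h2

noncomputable def FF : ℝ → ℝ := fun t => Real.log |2 * Real.sin t|

lemma FF_meas : Measurable FF :=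
  Real.measurable_log.comp ((measurable_const.mul Real.measurable_sin).abs)

lemma FF_int_half : IntervalIntegrable FF volume 0 (π/2) := by
  rw [intervalIntegrable_iff, uIoc_of_le (by positivity)]
  have hbound : ∀ t ∈ Ioc (0:ℝ) (π/2), ‖FF t‖ ≤ |Real.log t| + 2 := by
    intro t ht
    have hs : 0 < Real.sin t := Real.sin_pos_of_pos_of_lt_pi ht.1 (lt_of_le_of_lt ht.2 (by linarith [pi_pos]))
    have habs : |2 * Real.sin t| = 2 * Real.sin t := abs_of_pos (by linarith)
    have hup : FF t ≤ Real.log 2 := by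
      rw [FF, habs]
      exact Real.log_le_log (by linarith) (by nlinarith [Real.sin_le_one t])
    have hlo : Real.log t + Real.log (4/π) ≤ FF t := by
      rw [FF, habs, ← Real.log_mul (ne_of_gt ht.1) (by positivity)]
      apply Real.log_le_log (mul_pos ht.1 (by positivity))
      have hms := Real.mul_le_sin ht.1.le ht.2
      have e : t * (4/π) = 2*(2/π*t) := by ring
      linarith
    have h4 : (0:ℝ) ≤ Real.log (4/π) :=
      Real.log_nonneg ((one_le_div pi_pos).mpr (by linarith [pi_lt_d2]))
    have h2 : Real.log 2 ≤ 2 := by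
      nlinarith [Real.log_le_sub_one_of_pos (by norm_num : (0:ℝ) < 2)]
    have h4' : Real.log (4/π) ≤ 2 := by
      have hl := Real.log_le_sub_one_of_pos (show (0:ℝ) < 4/π by positivity)
      have : 4/π ≤ 3 := by rw [div_le_iff₀ pi_pos]; nlinarith [pi_gt_three]
      linarith
    rw [Real.norm_eq_abs, abs_le]
    constructor
    · nlinarith [abs_nonneg (Real.log t), neg_abs_le (Real.log t)]
    · nlinarith [abs_nonneg (Real.log t)]
  apply Integrable.mono' (g := fun t => |Real.log t| + 2) ?_ (FF_meas.aestronglyMeasurable) ?_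
  · apply IntegrableOn.mono_set (t := Ioc 0 1 ∪ Icc 1 2)
    · apply IntegrableOn.union
      · exact integrableOn_log01.abs.add (integrableOn_const measure_Ioc_lt_top.ne)
      · apply ContinuousOn.integrableOn_compact isCompact_Icc
        apply ContinuousOn.add ?_ continuousOn_const
        exact (Real.continuousOn_log.mono (by intro x hx; simp; linarith [hx.1])).abs
    · intro x hx
      rcases le_or_gt x 1 with h | h
      · exact Or.inl ⟨hx.1, h⟩
      · exact Or.inr ⟨h.le, le_trans hx.2 (by nlinarith [pi_lt_d2])⟩
  · exact (ae_restrict_iff' measurableSet_Ioc).mpr (Filter.Eventually.of_forall hbound)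

lemma FF_refl (t : ℝ) : FF (π - t) = FF t := by
  simp [FF, Real.sin_pi_sub]

lemma FF_even (t : ℝ) : FF (-t) = FF t := by
  simp [FF, Real.sin_neg, abs_mul]

lemma FF_int_upper : IntervalIntegrable FF volume (π/2) π := by
  have h := FF_int_half.comp_sub_left π
  simp only [FF_refl] at h
  have : IntervalIntegrable FF volume (π - 0) (π - π/2) := h
  simpa [sub_half] using this.symm

lemma FF_int_0pi : IntervalIntegrable FF volume 0 π :=
  FF_int_half.trans FF_int_upper

lemma FF_int_neg : IntervalIntegrable FF volume (-1) 0 := by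
  have h := (IntervalIntegrable.iff_comp_neg).mp FF_int_half
  simp only [FF_even, neg_zero] at h
  exact (h.symm).mono_set (by
    rw [uIcc_of_le (show (-1:ℝ) ≤ 0 by norm_num),
        uIcc_of_le (show -(π/2) ≤ (0:ℝ) by linarith [pi_pos])]
    exact Icc_subset_Icc (by linarith [pi_gt_three]) le_rfl)

lemma FF_int_main : IntervalIntegrable FF volume (-1) π :=
  FF_int_neg.trans FF_int_0pi

lemma FF_int_reflected : IntervalIntegrable (fun x => FF (π/2 - x)) volume 0 (π/2) := by
  have h := FF_int_half.comp_sub_left (π/2)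
  simpa using h.symm

lemma integral_FF_refl : (∫ x in (0:ℝ)..(π/2), FF (π/2 - x)) = ∫ x in (0:ℝ)..(π/2), FF x := by
  rw [integral_comp_sub_left FF (π/2)]
  norm_num

lemma integral_FF_upper : (∫ x in (π/2)..π, FF x) = ∫ x in (0:ℝ)..(π/2), FF x := by
  have h := integral_comp_sub_left FF π (a := 0) (b := π/2)
  simp only [FF_refl, sub_zero, sub_half] at h
  exact h.symm

lemma integral_FF_zero : (∫ t in (0:ℝ)..π, FF t) = 0 := by
  set J := ∫ x in (0:ℝ)..(π/2), FF x with hJ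
  have hIJ : (∫ t in (0:ℝ)..π, FF t) = 2 * J := by
    rw [← integral_add_adjacent_intervals FF_int_half FF_int_upper, integral_FF_upper]; ring
  have hdouble : (∫ x in (0:ℝ)..(π/2), FF (2*x)) = 2⁻¹ * (∫ t in (0:ℝ)..π, FF t) := by
    have h := integral_comp_mul_left (a := (0:ℝ)) (b := π/2) (c := 2) FF (by norm_num)
    rw [h, smul_eq_mul, show (2:ℝ) * (π/2) = π by ring]
    norm_num
  have hsplit : (∫ x in (0:ℝ)..(π/2), FF (2*x))
      = ∫ x in (0:ℝ)..(π/2), (FF x + FF (π/2 - x)) := by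
    apply intervalIntegral.integral_congr_ae
    have hne : ∀ᵐ x : ℝ, x ≠ π/2 := by
      simp [ae_iff, Real.volume_singleton]
    filter_upwards [hne] with x hx hmem
    rw [uIoc_of_le (by positivity)] at hmem
    have hx1 : 0 < x := hmem.1
    have hx2 : x < π/2 := lt_of_le_of_ne hmem.2 hx
    have hs : 0 < Real.sin x := Real.sin_pos_of_pos_of_lt_pi hx1 (by linarith [pi_pos])
    have hc : 0 < Real.cos x := Real.cos_pos_of_mem_Ioo ⟨by linarith [pi_pos], hx2⟩
    have h1 : FF (2*x) = FF x + FF (π/2 - x) := by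
      simp only [FF, Real.sin_two_mul, Real.sin_pi_div_two_sub]
      rw [show |2*(2 * Real.sin x * Real.cos x)| = |2*Real.sin x| * |2*Real.cos x| by
        rw [← abs_mul]; ring_nf]
      rw [Real.log_mul (by positivity) (by positivity)]
    exact h1
  have hadd : (∫ x in (0:ℝ)..(π/2), (FF x + FF (π/2 - x))) = 2 * J := by
    rw [integral_add FF_int_half FF_int_reflected, integral_FF_refl]; ring
  have : 2⁻¹ * (2 * J) = 2 * J := by
    rw [← hIJ, ← hdouble, hsplit, hadd, hIJ]
  linarith

open Complex

lemma lob_eq (θ : ℝ) : lob θ = -∫ t in (0:ℝ)..θ, FF t := rfl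

lemma lob_pi : lob π = 0 := by rw [lob_eq, integral_FF_zero, neg_zero]

lemma lob_zero : lob 0 = 0 := by rw [lob_eq, intervalIntegral.integral_same, neg_zero]

lemma lob_continuousOn : ContinuousOn lob (Icc (-1:ℝ) π) := by
  have h := intervalIntegral.continuousOn_primitive_interval' FF_int_main
    (a := 0) (by
      rw [uIcc_of_le (by linarith [pi_pos])]
      exact ⟨by norm_num, pi_pos.le⟩)
  rw [uIcc_of_le (by linarith [pi_pos])] at h
  exact h.neg

lemma tendsto_lob {θ : ℕ → ℝ} {c : ℝ} (hmem : ∀ k, θ k ∈ Icc (-1:ℝ) π)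
    (h : Tendsto θ atTop (nhds c)) (hc : c ∈ Icc (-1:ℝ) π) :
    Tendsto (fun k => lob (θ k)) atTop (nhds (lob c)) :=
  ((lob_continuousOn c hc).tendsto).comp
    (tendsto_nhdsWithin_iff.mpr ⟨h, Eventually.of_forall hmem⟩)

lemma mem_Icc_of_arg {w : ℂ} (hw : 0 ≤ w.im) : w.arg ∈ Icc (-1:ℝ) π :=
  ⟨le_trans (by norm_num) (arg_nonneg_iff.mpr hw), arg_le_pi w⟩

theorem active_volumes_tendsto_zero :
    Filter.Tendsto (fun k : ℕ => vol ((1 - 2 * (k : ℂ) + Real.sqrt 3 * I) / 2))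
      Filter.atTop (nhds 0) := by
  set z : ℕ → ℂ := fun k => (1 - 2 * (k : ℂ) + Real.sqrt 3 * I) / 2 with hz
  have h3 : (0:ℝ) < Real.sqrt 3 := Real.sqrt_pos.mpr (by norm_num)
  have hre : ∀ k, (z k).re = (1 - 2*(k:ℝ))/2 := fun k => by simp [hz]
  have him : ∀ k, (z k).im = Real.sqrt 3/2 := fun k => by simp [hz]
  have hz0 : ∀ k, z k ≠ 0 := fun k h => by
    have := him k; rw [h] at this; simp at this; linarith
  -- abs z k → ∞
  have habs : Tendsto (fun k => ‖z k‖) atTop atTop := by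
    apply tendsto_atTop_mono' atTop (f₁ := fun k : ℕ => (k:ℝ) - 1/2)
    · filter_upwards [eventually_ge_atTop 1] with k hk
      have h1 : |(z k).re| ≤ ‖z k‖ := Complex.abs_re_le_norm _
      have h2 : (1:ℝ) ≤ (k:ℝ) := by exact_mod_cast hk
      rw [hre k] at h1
      rw [abs_of_nonpos (by linarith)] at h1
      linarith
    · exact tendsto_atTop_add_const_right _ _ tendsto_natCast_atTop_atTop
  -- abs (1 - z k) → ∞
  have habs' : Tendsto (fun k => ‖1 - z k‖) atTop atTop := by
    apply tendsto_atTop_mono' atTop (f₁ := fun k : ℕ => (k:ℝ) + 1/2)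
    · filter_upwards with k
      have h1 : |(1 - z k).re| ≤ ‖1 - z k‖ := Complex.abs_re_le_norm _
      have hh : (1 - z k).re = (1 + 2*(k:ℝ))/2 := by
        rw [Complex.sub_re, Complex.one_re, hre k]; ring
      rw [hh, _root_.abs_of_nonneg (by positivity)] at h1
      linarith
    · exact tendsto_atTop_add_const_right _ _ tendsto_natCast_atTop_atTop
  -- θ₁
  have hθ1 : Tendsto (fun k => (z k).arg) atTop (nhds π) := by
    have heq : ∀ᶠ k in atTop, Real.arcsin (-(Real.sqrt 3/2) / ‖z k‖) + π
        = (z k).arg := by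
      filter_upwards [eventually_ge_atTop 1] with k hk
      have h2 : (1:ℝ) ≤ (k:ℝ) := by exact_mod_cast hk
      rw [Complex.arg_of_re_neg_of_im_nonneg (by rw [hre k]; linarith) (by rw [him k]; positivity)]
      congr 2
      rw [Complex.neg_im, him k]
    apply Tendsto.congr' heq
    have : Tendsto (fun k => Real.arcsin (-(Real.sqrt 3/2) / ‖z k‖)) atTop
        (nhds 0) := by
      have hd : Tendsto (fun k => -(Real.sqrt 3/2) / ‖z k‖) atTop (nhds 0) :=
        Tendsto.div_atTop tendsto_const_nhds habs
      have := (Real.continuous_arcsin.tendsto 0).comp hd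
      simpa [Function.comp_def] using this
    simpa using this.add_const π
  -- θ₂
  have hθ2 : Tendsto (fun k => (1 / (1 - z k)).arg) atTop (nhds 0) := by
    have heq : ∀ k, (1 / (1 - z k)).arg
        = -Real.arcsin ((-(Real.sqrt 3)/2) / ‖1 - z k‖) := by
      intro k
      have him' : (1 - z k).im = -(Real.sqrt 3)/2 := by
        rw [Complex.sub_im, Complex.one_im, him k]; ring
      have hre' : (0:ℝ) ≤ (1 - z k).re := by
        rw [Complex.sub_re, Complex.one_re, hre k]
        have hk0 : (0:ℝ) ≤ (k:ℝ) := Nat.cast_nonneg k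
        linarith
      have hnepi : (1 - z k).arg ≠ π := by
        rw [Ne, Complex.arg_eq_pi_iff]
        rintro ⟨h1, -⟩
        linarith
      rw [one_div, Complex.arg_inv, if_neg hnepi, Complex.arg_of_re_nonneg hre', him']
    simp only [heq]
    have hd : Tendsto (fun k => (-(Real.sqrt 3)/2) / ‖1 - z k‖) atTop (nhds 0) :=
      Tendsto.div_atTop tendsto_const_nhds habs'
    have := (Real.continuous_arcsin.tendsto 0).comp hd
    simp only [Real.arcsin_zero] at this
    simpa using this.neg
  -- θ₃
  have hw : ∀ k, (z k - 1) / z k = 1 - (z k)⁻¹ := by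
    intro k
    rw [sub_div, div_self (hz0 k), one_div]
  have hθ3 : Tendsto (fun k => ((z k - 1) / z k).arg) atTop (nhds 0) := by
    simp only [hw]
    have hinv : Tendsto (fun k => (z k)⁻¹) atTop (nhds 0) := by
      rw [tendsto_zero_iff_norm_tendsto_zero]
      simpa [norm_inv, Pi.inv_def] using habs.inv_tendsto_atTop
    have hlim : Tendsto (fun k => 1 - (z k)⁻¹) atTop (nhds 1) := by
      simpa using (tendsto_const_nhds (x := (1:ℂ))).sub hinv
    have harg : ContinuousAt Complex.arg 1 :=
      Complex.continuousAt_arg (by simp [Complex.mem_slitPlane_iff])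
    have := harg.tendsto.comp hlim
    simpa [Complex.arg_one, Function.comp_def] using this
  -- memberships
  have hm1 : ∀ k, (z k).arg ∈ Icc (-1:ℝ) π := fun k =>
    mem_Icc_of_arg (by rw [him k]; positivity)
  have hm2 : ∀ k, (1 / (1 - z k)).arg ∈ Icc (-1:ℝ) π := fun k => by
    apply mem_Icc_of_arg
    rw [one_div, Complex.inv_im, Complex.sub_im, Complex.one_im, him k, zero_sub, neg_neg]
    exact div_nonneg (by positivity) (Complex.normSq_nonneg _)
  have hm3 : ∀ k, ((z k - 1) / z k).arg ∈ Icc (-1:ℝ) π := fun k => by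
    apply mem_Icc_of_arg
    rw [hw k, Complex.sub_im, Complex.one_im, Complex.inv_im, him k, zero_sub, neg_div, neg_neg]
    exact div_nonneg (by positivity) (Complex.normSq_nonneg _)
  have hpimem : π ∈ Icc (-1:ℝ) π := ⟨by linarith [pi_pos], le_rfl⟩
  have h0mem : (0:ℝ) ∈ Icc (-1:ℝ) π := ⟨by norm_num, pi_pos.le⟩
  have hfinal := ((tendsto_lob hm1 hθ1 hpimem).add (tendsto_lob hm2 hθ2 h0mem)).add
    (tendsto_lob hm3 hθ3 h0mem)
  rw [lob_pi, lob_zero] at hfinal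
  simpa [vol] using hfinal
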